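/- arXiv:1709.07314 — 3 statements merged into one kernel-verified Lean document; each statement's English description precedes it below -/
import Mathlib

section
/- For EL concept expressions C and D, the subsumption C ⊑ D holds in every interpretation (i.e., C^I ⊆ D^I for every interpretation I) if and only if there is a homomorphism from the tree representation T_D to the tree representation T_C that maps the root of T_D to the root of T_C. -/
/-- EL concept expressions over concept names `C` and role names `R`. -/
inductive ELC (C R : Type) : Type where
  | top : ELC C R
  | cn : C → ELC C R
  | conj : ELC C R → ELC C R → ELC C R
  | ex : R → ELC C R → ELC C R

/-- An interpretation: a nonempty domain with interpretations of
concept and role names. -/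
structure Interp (C R : Type) where
  dom : Type
  inhab : Nonempty dom
  cname : C → Set dom
  rname : R → Set (dom × dom)

/-- Semantics of EL concept expressions. -/
def Interp.sem {C R : Type} (I : Interp C R) : ELC C R → Set I.dom
  | .top => Set.univ
  | .cn A => I.cname A
  | .conj c d => I.sem c ∩ I.sem d
  | .ex r c => {x | ∃ y, (x, y) ∈ I.rname r ∧ y ∈ I.sem c}

/-- The top-level existential successors of a concept: the children of the
root of its tree representation, with their edge labels. -/
def ELC.succs {C R : Type} : ELC C R → List (R × ELC C R)
  | .top => []
  | .cn _ => []
  | .conj c d => c.succs ++ d.succs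
  | .ex r c => [(r, c)]

/-- The concept names labelling the root of the tree representation. -/
def ELC.topNames {C R : Type} : ELC C R → List C
  | .top => []
  | .cn A => [A]
  | .conj c d => c.topNames ++ d.topNames
  | .ex _ _ => []

/-- The subconcept sitting at a given position (sequence of child indices)
of the tree representation of `c`. -/
def subtreeAt {C R : Type} : ELC C R → List ℕ → Option (ELC C R)
  | c, [] => some c
  | c, i :: p =>
    match c.succs[i]? with
    | some rd => subtreeAt rd.2 p
    | none => none

/-- The tree representation `T_C` of a concept `c`, presented as an
interpretation: nodes are the valid positions in the tree of `c`, a node is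
labelled by (i.e. belongs to) the concept names labelling it, and edges go
from a node to its children with the corresponding role label. -/
def treeNode {C R : Type} (c : ELC C R) : Type :=
  {p : List ℕ // (subtreeAt c p).isSome}

def treeInterp {C R : Type} (c : ELC C R) : Interp C R where
  dom := treeNode c
  inhab := ⟨⟨[], rfl⟩⟩
  cname A := {p | ∃ d, subtreeAt c p.1 = some d ∧ A ∈ d.topNames}
  rname r := {q | ∃ i, q.2.1 = q.1.1 ++ [i] ∧
      ∃ d, subtreeAt c q.1.1 = some d ∧ ∃ e, d.succs[i]? = some (r, e)}

/-- The root of the tree representation. -/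
def treeRoot {C R : Type} (c : ELC C R) : treeNode c :=
  ⟨[], rfl⟩

/-- A homomorphism from the labelled tree `T_C` (viewed as an interpretation)
to an interpretation: `A ∈ l(d)` implies `h d ∈ A^I`, and an `r`-labelled
edge `(d,d')` implies `(h d, h d') ∈ r^I`. -/
def IsHom {C R : Type} (I J : Interp C R) (h : I.dom → J.dom) : Prop :=
  (∀ A x, x ∈ I.cname A → h x ∈ J.cname A) ∧
  ∀ r x y, (x, y) ∈ I.rname r → (h x, h y) ∈ J.rname r


lemma subtreeAt_append {C R : Type} (c : ELC C R) (p q : List ℕ) :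
    subtreeAt c (p ++ q) = (subtreeAt c p).bind (fun e => subtreeAt e q) := by
  induction p generalizing c with
  | nil => simp [subtreeAt]
  | cons i p ih =>
    cases h : c.succs[i]? with
    | none => simp [subtreeAt, h]
    | some rd => simp [subtreeAt, h, ih]

lemma mem_sem_iff {C R : Type} (I : Interp C R) (e : ELC C R) (x : I.dom) :
    x ∈ I.sem e ↔ (∀ A ∈ e.topNames, x ∈ I.cname A) ∧
      (∀ re ∈ e.succs, ∃ y, (x, y) ∈ I.rname re.1 ∧ y ∈ I.sem re.2) := by
  induction e with
  | top => simp [Interp.sem, ELC.topNames, ELC.succs]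
  | cn A => simp [Interp.sem, ELC.topNames, ELC.succs]
  | conj c d ih1 ih2 =>
    simp only [Interp.sem, ELC.topNames, ELC.succs, Set.mem_inter_iff, ih1, ih2,
      List.mem_append]
    constructor
    · rintro ⟨⟨h1, h2⟩, h3, h4⟩
      exact ⟨fun A hA => hA.elim (h1 A) (h3 A), fun re hre => hre.elim (h2 re) (h4 re)⟩
    · rintro ⟨h1, h2⟩
      exact ⟨⟨fun A hA => h1 A (Or.inl hA), fun re hre => h2 re (Or.inl hre)⟩,
        fun A hA => h1 A (Or.inr hA), fun re hre => h2 re (Or.inr hre)⟩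
  | ex r c ih =>
    simp [Interp.sem, ELC.topNames, ELC.succs]

attribute [local instance] Classical.propDecidable

noncomputable def follow {C R : Type} (I : Interp C R) : List ℕ → ELC C R → I.dom → I.dom
  | [], _, x => x
  | i :: p, e, x =>
    match e.succs[i]? with
    | some (r, e') =>
        if h : ∃ y, (x, y) ∈ I.rname r ∧ y ∈ I.sem e' then follow I p e' h.choose
        else x
    | none => x

lemma follow_sem {C R : Type} (I : Interp C R) :
    ∀ (p : List ℕ) (e e' : ELC C R) (x : I.dom), x ∈ I.sem e →
      subtreeAt e p = some e' → follow I p e x ∈ I.sem e' := by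
  intro p
  induction p with
  | nil =>
    intro e e' x hx he
    simp only [subtreeAt, Option.some.injEq] at he
    subst he; exact hx
  | cons i p ih =>
    intro e e' x hx he
    cases h : e.succs[i]? with
    | none => simp [subtreeAt, h] at he
    | some rd =>
      obtain ⟨r, e''⟩ := rd
      simp only [subtreeAt, h] at he
      have hmem : (r, e'') ∈ e.succs := List.mem_of_getElem? h
      have hex : ∃ y, (x, y) ∈ I.rname r ∧ y ∈ I.sem e'' :=
        ((mem_sem_iff I e x).mp hx).2 (r, e'') hmem
      simp only [follow, h, dif_pos hex]
      exact ih e'' e' hex.choose hex.choose_spec.2 he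

lemma follow_edge {C R : Type} (I : Interp C R) :
    ∀ (p : List ℕ) (e e' : ELC C R) (x : I.dom), x ∈ I.sem e →
      subtreeAt e p = some e' → ∀ (i : ℕ) (r : R) (e'' : ELC C R),
      e'.succs[i]? = some (r, e'') →
      (follow I p e x, follow I (p ++ [i]) e x) ∈ I.rname r := by
  intro p
  induction p with
  | nil =>
    intro e e' x hx he i r e'' hi
    simp only [subtreeAt, Option.some.injEq] at he
    subst he
    have hmem : (r, e'') ∈ e.succs := List.mem_of_getElem? hi
    have hex : ∃ y, (x, y) ∈ I.rname r ∧ y ∈ I.sem e'' :=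
      ((mem_sem_iff I e x).mp hx).2 (r, e'') hmem
    simp only [List.nil_append, follow, hi, dif_pos hex]
    exact hex.choose_spec.1
  | cons j p ih =>
    intro e e' x hx he i r e'' hi
    cases h : e.succs[j]? with
    | none => simp [subtreeAt, h] at he
    | some rd =>
      obtain ⟨r₀, e₀⟩ := rd
      simp only [subtreeAt, h] at he
      have hmem : (r₀, e₀) ∈ e.succs := List.mem_of_getElem? h
      have hex : ∃ y, (x, y) ∈ I.rname r₀ ∧ y ∈ I.sem e₀ :=
        ((mem_sem_iff I e x).mp hx).2 (r₀, e₀) hmem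
      simp only [List.cons_append, follow, h, dif_pos hex]
      exact ih e₀ e' hex.choose hex.choose_spec.2 he i r e'' hi

/-- From `x ∈ I.sem d` we get a homomorphism from `T_d` to `I` sending the
root to `x`. -/
lemma exists_hom {C R : Type} (d : ELC C R) (I : Interp C R) (x : I.dom)
    (hx : x ∈ I.sem d) :
    ∃ g : (treeInterp d).dom → I.dom, IsHom (treeInterp d) I g ∧ g (treeRoot d) = x := by
  refine ⟨fun q => follow I q.1 d x, ⟨?_, ?_⟩, rfl⟩
  · rintro A q ⟨e, he, hA⟩
    exact ((mem_sem_iff I e _).mp (follow_sem I q.1 d e x hx he)).1 A hA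
  · rintro r q q' ⟨i, hq', e, he, e', hs⟩
    have h2 : q'.1 = q.1 ++ [i] := hq'
    show (follow I q.1 d x, follow I q'.1 d x) ∈ I.rname r
    rw [h2]
    exact follow_edge I q.1 d e x hx he i r e' hs

/-- A homomorphism from `T_c` to `I` makes every node satisfy its subtree. -/
lemma hom_sem {C R : Type} (c : ELC C R) (I : Interp C R)
    (h : (treeInterp c).dom → I.dom) (hh : IsHom (treeInterp c) I h) :
    ∀ (e : ELC C R) (q : treeNode c) (e' : ELC C R),
      subtreeAt c q.1 = some e' →
      (∀ A ∈ e.topNames, A ∈ e'.topNames) → (∀ s ∈ e.succs, s ∈ e'.succs) →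
      h q ∈ I.sem e := by
  intro e
  induction e with
  | top => intro q e' _ _ _; trivial
  | cn A =>
    intro q e' hp hN _
    exact hh.1 A q ⟨e', hp, hN A (by simp [ELC.topNames])⟩
  | conj c₁ c₂ ih1 ih2 =>
    intro q e' hp hN hS
    refine ⟨ih1 q e' hp ?_ ?_, ih2 q e' hp ?_ ?_⟩
    · exact fun A hA => hN A (by simp [ELC.topNames, hA])
    · exact fun s hs => hS s (by simp [ELC.succs, hs])
    · exact fun A hA => hN A (by simp [ELC.topNames, hA])
    · exact fun s hs => hS s (by simp [ELC.succs, hs])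
  | ex r c₁ ih =>
    intro q e' hp _ hS
    have hmem : (r, c₁) ∈ e'.succs := hS (r, c₁) (by simp [ELC.succs])
    obtain ⟨i, _, hi⟩ := List.mem_iff_getElem.mp hmem
    have hi' : e'.succs[i]? = some (r, c₁) := by
      rw [List.getElem?_eq_getElem]; exact congrArg some hi
      assumption
    have hsub : subtreeAt c (q.1 ++ [i]) = some c₁ := by
      rw [subtreeAt_append, hp]
      simp [subtreeAt, hi']
    have hq' : (subtreeAt c (q.1 ++ [i])).isSome := by rw [hsub]; rfl
    set q' : treeNode c := ⟨q.1 ++ [i], hq'⟩ with hq'def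
    have hedge : (q, q') ∈ (treeInterp c).rname r := ⟨i, rfl, e', hp, c₁, hi'⟩
    exact ⟨h q', hh.2 r q q' hedge, ih q' c₁ hsub (fun _ h => h) (fun _ h => h)⟩

/-- `C ⊑ D` holds in every interpretation iff there is a
homomorphism from the tree representation `T_D` to the tree representation
`T_C` mapping the root of `T_D` to the root of `T_C`. -/
theorem subsumption_iff_tree_hom {C R : Type} (c d : ELC C R) :
    (∀ I : Interp C R, I.sem c ⊆ I.sem d) ↔
      ∃ h : (treeInterp d).dom → (treeInterp c).dom,
        IsHom (treeInterp d) (treeInterp c) h ∧ h (treeRoot d) = treeRoot c := by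
  constructor
  · intro hsub
    have idhom : IsHom (treeInterp c) (treeInterp c) id :=
      ⟨fun _ _ h => h, fun _ _ _ h => h⟩
    have hc : treeRoot c ∈ (treeInterp c).sem c :=
      hom_sem c (treeInterp c) id idhom c (treeRoot c) c rfl (fun _ h => h) (fun _ h => h)
    exact exists_hom d (treeInterp c) (treeRoot c) (hsub _ hc)
  · rintro ⟨h, hh, hroot⟩ I x hx
    obtain ⟨g, hg, hgroot⟩ := exists_hom c I x hx
    have comp : IsHom (treeInterp d) I (g ∘ h) :=
      ⟨fun A y hy => hg.1 A _ (hh.1 A y hy),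
       fun r a b hab => hg.2 r _ _ (hh.2 r a b hab)⟩
    have := hom_sem d I (g ∘ h) comp d (treeRoot d) d rfl (fun _ h => h) (fun _ h => h)
    simpa [Function.comp, hroot, hgroot] using this
end

section
/- If C' is obtained from an EL concept expression C by parent/child merging (choosing nodes d, d', d'' in the tree of C such that d is an r-successor of d' and d'' is an r⁻-successor of d, then removing d'', adding the label of d'' to the label of d', and reattaching all successors of d'' to d'), then C' ⊑ C holds in every interpretation (∅ ⊨ C' ⊑ C). -/
/-- Roles: role names and inverse roles. -/
inductive Role (R : Type) : Type where
  | nm : R → Role R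
  | inv : R → Role R

/-- The inverse of a role, identifying `(r⁻)⁻` with `r`. -/
def Role.opp {R : Type} : Role R → Role R
  | .nm r => .inv r
  | .inv r => .nm r

/-- Semantics of roles; an inverse role denotes the converse relation. -/
def Interp.roleSem {C R : Type} (I : Interp C R) : Role R → Set (I.dom × I.dom)
  | .nm r => I.rname r
  | .inv r => {p | (p.2, p.1) ∈ I.rname r}

/-- Semantics of concept expressions whose existential restrictions use
roles (role names or inverse roles). -/
def Interp.semI {C R : Type} (I : Interp C R) : ELC C (Role R) → Set I.dom
  | .top => Set.univ
  | .cn A => I.cname A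
  | .conj c d => I.semI c ∩ I.semI d
  | .ex ρ c => {x | ∃ y, (x, y) ∈ I.roleSem ρ ∧ y ∈ I.semI c}

/-- `Split X G X'` holds when `G` is (an occurrence of) a top-level conjunct
of `X` and `X'` is `X` with that occurrence removed (the remainder being `⊤`
when `G` is all of `X`). -/
inductive Split {C R : Type} : ELC C R → ELC C R → ELC C R → Prop where
  | base (c : ELC C R) : Split c c .top
  | left {a g a' : ELC C R} (b : ELC C R) : Split a g a' → Split (.conj a b) g (.conj a' b)
  | right {b g b' : ELC C R} (a : ELC C R) : Split b g b' → Split (.conj a b) g (.conj a b')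

/-- `PCMerge X X'`: `X'` is obtained from `X` by parent/child merging.
At some node `d'` of the tree of `X` (reached through the congruence rules)
there is an `ρ`-successor `d` (a top-level conjunct `∃ρ.D`), and `d` has an
`ρ⁻`-successor `d''` (a top-level conjunct `∃ρ⁻.F` of `D`).  The node `d''`
is removed, its label is added to the label of `d'`, and its successors are
reattached to `d'`; i.e. the conjunct `∃ρ.D` is replaced by `∃ρ.D' ⊓ F`,
where `D'` is `D` without the conjunct `∃ρ⁻.F`. -/
inductive PCMerge {C R : Type} : ELC C (Role R) → ELC C (Role R) → Prop where
  | here {X X' D D' F : ELC C (Role R)} {ρ : Role R} :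
      Split X (.ex ρ D) X' → Split D (.ex ρ.opp F) D' →
      PCMerge X (.conj (.conj X' (.ex ρ D')) F)
  | conjL {a a' : ELC C (Role R)} (b : ELC C (Role R)) :
      PCMerge a a' → PCMerge (.conj a b) (.conj a' b)
  | conjR {b b' : ELC C (Role R)} (a : ELC C (Role R)) :
      PCMerge b b' → PCMerge (.conj a b) (.conj a b')
  | under {a a' : ELC C (Role R)} (ρ : Role R) :
      PCMerge a a' → PCMerge (.ex ρ a) (.ex ρ a')


lemma split_sem {C R : Type} (I : Interp C R) {X G X' : ELC C (Role R)}
    (h : Split X G X') : I.semI X = I.semI G ∩ I.semI X' := by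
  induction h with
  | base c => simp [Interp.semI]
  | left b _ ih => simp only [Interp.semI, ih]; ext x; simp; tauto
  | right a _ ih => simp only [Interp.semI, ih]; ext x; simp; tauto

lemma opp_sem {C R : Type} (I : Interp C R) (ρ : Role R) (x y : I.dom) :
    (x, y) ∈ I.roleSem ρ → (y, x) ∈ I.roleSem ρ.opp := by
  cases ρ <;> simp [Interp.roleSem, Role.opp]

/-- if `C'` is obtained from `C` by parent/child merging,
then `∅ ⊨ C' ⊑ C`, i.e. `C'^I ⊆ C^I` for every interpretation `I`. -/
theorem pcMerge_subsumes {C R : Type} (c c' : ELC C (Role R))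
    (h : PCMerge c c') (I : Interp C R) :
    I.semI c' ⊆ I.semI c := by
  induction h with
  | @here X X' D D' F ρ hs hd =>
    intro x hx
    obtain ⟨⟨hX', y, hxy, hyD'⟩, hF⟩ := hx
    rw [split_sem I hs]
    refine ⟨⟨y, hxy, ?_⟩, hX'⟩
    rw [split_sem I hd]
    exact ⟨⟨x, opp_sem I ρ x y hxy, hF⟩, hyD'⟩
  | conjL b _ ih => intro x hx; exact ⟨ih hx.1, hx.2⟩
  | conjR a _ ih => intro x hx; exact ⟨hx.1, ih hx.2⟩
  | under ρ _ ih =>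
    rintro x ⟨y, hxy, hy⟩; exact ⟨y, hxy, ih hy⟩
end

section
/- For any TBox T (finite set of concept inclusions and role inclusions) and roles r, s: T entails r ⊑ s if and only if there exists a finite sequence of roles r_0, ..., r_n with r_0 = r, r_n = s, and for every i < n either r_i ⊑ r_{i+1} ∈ T or r_i⁻ ⊑ r_{i+1}⁻ ∈ T. -/
/-- A TBox: a finite set (list) of concept inclusions between concept
expressions (with roles, possibly inverse, in existential restrictions)
and role inclusions between roles. -/
structure TBox (C R : Type) where
  cis : List (ELC C (Role R) × ELC C (Role R))
  ris : List (Role R × Role R)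

/-- `I` is a model of the TBox `T`. -/
def Interp.model {C R : Type} (I : Interp C R) (T : TBox C R) : Prop :=
  (∀ p ∈ T.cis, I.semI p.1 ⊆ I.semI p.2) ∧
  ∀ p ∈ T.ris, I.roleSem p.1 ⊆ I.roleSem p.2

/-- `T ⊨ ρ ⊑ σ`: the role inclusion holds in every model of `T`. -/
def TBox.entailsRI {C R : Type} (T : TBox C R) (ρ σ : Role R) : Prop :=
  ∀ I : Interp C R, I.model T → I.roleSem ρ ⊆ I.roleSem σ

lemma Role.opp_opp {R : Type} (ρ : Role R) : ρ.opp.opp = ρ := by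
  cases ρ <;> rfl

/-- One rewriting step. -/
def TStep {C R : Type} (T : TBox C R) (ρ σ : Role R) : Prop :=
  (ρ, σ) ∈ T.ris ∨ (ρ.opp, σ.opp) ∈ T.ris

lemma TStep.opp {C R : Type} {T : TBox C R} {ρ σ : Role R}
    (h : TStep T ρ σ) : TStep T ρ.opp σ.opp := by
  rcases h with h | h
  · exact Or.inr (by simpa [Role.opp_opp] using h)
  · exact Or.inl h

lemma roleSem_opp_mem {C R : Type} (I : Interp C R) (ρ : Role R)
    (p : I.dom × I.dom) : p ∈ I.roleSem ρ.opp ↔ (p.2, p.1) ∈ I.roleSem ρ := by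
  cases ρ <;> simp [Interp.roleSem, Role.opp]

lemma step_sub {C R : Type} {T : TBox C R} {I : Interp C R} (hI : I.model T)
    {ρ σ : Role R} (h : TStep T ρ σ) : I.roleSem ρ ⊆ I.roleSem σ := by
  rcases h with h | h
  · exact hI.2 _ h
  · intro p hp
    have h2 : (p.2, p.1) ∈ I.roleSem σ.opp :=
      hI.2 _ h ((roleSem_opp_mem I ρ (p.2, p.1)).mpr (by simpa using hp))
    have := (roleSem_opp_mem I σ (p.2, p.1)).mp h2
    simpa using this

lemma chain_sub {C R : Type} {T : TBox C R} {I : Interp C R} (hI : I.model T) :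
    ∀ (n : ℕ) (g : Fin (n + 1) → Role R),
      (∀ i : Fin n, TStep T (g i.castSucc) (g i.succ)) →
      I.roleSem (g 0) ⊆ I.roleSem (g (Fin.last n)) := by
  intro n
  induction n with
  | zero => intro g _; rfl
  | succ n ih =>
    intro g hg
    have h1 := ih (fun i => g i.castSucc)
      (fun i => by
        have := hg i.castSucc
        simpa only [Fin.succ_castSucc] using this)
    have h2 := step_sub hI (hg (Fin.last n))
    have : (Fin.last n).succ = Fin.last (n + 1) := rfl
    rw [this] at h2
    exact fun p hp => h2 (h1 (by simpa using hp))

lemma reach_opp {C R : Type} {T : TBox C R} {a b : Role R}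
    (h : Relation.ReflTransGen (TStep T) a b) :
    Relation.ReflTransGen (TStep T) a.opp b.opp := by
  induction h with
  | refl => exact .refl
  | tail _ hbc ih => exact ih.tail hbc.opp

lemma reach_chain {C R : Type} {T : TBox C R} {r s : Role R}
    (h : Relation.ReflTransGen (TStep T) r s) :
    ∃ (n : ℕ) (g : Fin (n + 1) → Role R), g 0 = r ∧ g (Fin.last n) = s ∧
      ∀ i : Fin n, TStep T (g i.castSucc) (g i.succ) := by
  induction h with
  | refl => exact ⟨0, fun _ => r, rfl, rfl, fun i => i.elim0⟩
  | @tail b c _ hbc ih =>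
    obtain ⟨n, g, h0, hl, hs⟩ := ih
    refine ⟨n + 1, Fin.snoc g c, ?_, ?_, ?_⟩
    · have e : (0 : Fin (n + 2)) = Fin.castSucc 0 := rfl
      rw [e, Fin.snoc_castSucc]; exact h0
    · rw [Fin.snoc_last]
    · intro i
      refine Fin.lastCases ?_ ?_ i
      · have e : (Fin.last n).succ = Fin.last (n + 1) := rfl
        rw [e, Fin.snoc_last, Fin.snoc_castSucc, hl]
        exact hbc
      · intro j
        rw [Fin.succ_castSucc, Fin.snoc_castSucc, Fin.snoc_castSucc]
        exact hs j

/-- The canonical two-point countermodel. -/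
def canonI {C R : Type} (T : TBox C R) (r : Role R) : Interp C R where
  dom := Bool
  inhab := ⟨true⟩
  cname _ := Set.univ
  rname a := {p | p.1 = p.2 ∨
    (Relation.ReflTransGen (TStep T) r (.nm a) ∧ p = (false, true)) ∨
    (Relation.ReflTransGen (TStep T) r (.inv a) ∧ p = (true, false))}

lemma canonI_roleSem {C R : Type} (T : TBox C R) (r ρ : Role R) :
    (canonI T r).roleSem ρ = {p | p.1 = p.2 ∨
      (Relation.ReflTransGen (TStep T) r ρ ∧ p = (false, true)) ∨
      (Relation.ReflTransGen (TStep T) r ρ.opp ∧ p = (true, false))} := by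
  cases ρ with
  | nm a => rfl
  | inv a =>
    ext ⟨x, y⟩
    simp only [canonI, Interp.roleSem, Role.opp, Set.mem_setOf_eq, Prod.mk.injEq]
    constructor
    · rintro (h | ⟨h, h1, h2⟩ | ⟨h, h1, h2⟩)
      · exact Or.inl h.symm
      · exact Or.inr (Or.inr ⟨h, by simp_all⟩)
      · exact Or.inr (Or.inl ⟨h, by simp_all⟩)
    · rintro (h | ⟨h, h1, h2⟩ | ⟨h, h1, h2⟩)
      · exact Or.inl h.symm
      · exact Or.inr (Or.inr ⟨h, by simp_all⟩)
      · exact Or.inr (Or.inl ⟨h, by simp_all⟩)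

lemma canonI_model {C R : Type} (T : TBox C R) (r : Role R) :
    (canonI T r).model T := by
  have huniv : ∀ c, (canonI T r).semI c = Set.univ := by
    intro c
    induction c with
    | top => rfl
    | cn A => rfl
    | conj c d ihc ihd => simp [Interp.semI, ihc, ihd]
    | ex ρ c ih =>
      ext x
      simp only [Interp.semI, Set.mem_setOf_eq, Set.mem_univ, iff_true]
      exact ⟨x, by rw [canonI_roleSem]; exact Or.inl rfl, by rw [ih]; trivial⟩
  constructor
  · intro p _
    rw [huniv, huniv]
  · intro p hp q hq
    rw [canonI_roleSem] at hq ⊢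
    have hp' : (p.1, p.2) ∈ T.ris := by simpa using hp
    rcases hq with h | ⟨h, rfl⟩ | ⟨h, rfl⟩
    · exact Or.inl h
    · exact Or.inr (Or.inl ⟨h.tail (Or.inl hp'), rfl⟩)
    · exact Or.inr (Or.inr ⟨h.tail (TStep.opp (Or.inl hp')), rfl⟩)


/-- `T ⊨ r ⊑ s` iff there is a finite sequence of roles
`r_0, …, r_n` with `r_0 = r`, `r_n = s`, and for every `i < n` either
`r_i ⊑ r_{i+1} ∈ T` or `r_i⁻ ⊑ r_{i+1}⁻ ∈ T`. -/
theorem entailsRI_iff_chain {C R : Type} (T : TBox C R) (r s : Role R) :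
    T.entailsRI r s ↔
      ∃ (n : ℕ) (g : Fin (n + 1) → Role R), g 0 = r ∧ g (Fin.last n) = s ∧
        ∀ i : Fin n, (g i.castSucc, g i.succ) ∈ T.ris ∨
          ((g i.castSucc).opp, (g i.succ).opp) ∈ T.ris := by
  constructor
  · intro h
    have hmem : ((false, true) : Bool × Bool) ∈ (canonI T r).roleSem r := by
      rw [canonI_roleSem]
      exact Or.inr (Or.inl ⟨.refl, rfl⟩)
    have hs := h (canonI T r) (canonI_model T r) hmem
    rw [canonI_roleSem] at hs
    rcases hs with h | ⟨h, _⟩ | ⟨_, h⟩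
    · exact absurd h (by simp)
    · exact reach_chain h
    · exact absurd h (by simp)
  · rintro ⟨n, g, h0, hl, hs⟩ I hI
    rw [← h0, ← hl]
    exact chain_sub hI n g hs
end
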